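/- For a nonempty closed convex set C not containing the origin, cl cone(C′) = C* = (C′)_∞, i.e., the closed conical hull of the antipolar equals the positive polar cone of C, which equals the recession cone of the antipolar. -/

import Mathlib

open scoped RealInnerProductSpace Pointwise

/-- The antipolar `C′ = {y : ⟨y,x⟩ ≥ 1 for all x ∈ C}`. -/
def antipolar {E : Type*} [NormedAddCommGroup E] [InnerProductSpace ℝ E] (C : Set E) :
    Set E :=
  {y : E | ∀ x ∈ C, 1 ≤ ⟪y, x⟫}

/-- The positive polar (dual) cone `C* = {y : ⟨x,y⟩ ≥ 0 for all x ∈ C}`. -/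
def posPolar {E : Type*} [NormedAddCommGroup E] [InnerProductSpace ℝ E] (C : Set E) :
    Set E :=
  {y : E | ∀ x ∈ C, 0 ≤ ⟪x, y⟫}

/-- The conical hull `cone D = ⋃_{λ ≥ 0} λD`. -/
def coneHull {E : Type*} [NormedAddCommGroup E] [NormedSpace ℝ E] (D : Set E) : Set E :=
  ⋃ (l : ℝ) (_ : 0 ≤ l), l • D

/-- The recession cone of a set `D`. -/
def recessionCone {E : Type*} [NormedAddCommGroup E] [NormedSpace ℝ E] (D : Set E) :
    Set E :=
  {y : E | ∀ x ∈ D, ∀ t : ℝ, 0 ≤ t → x + t • y ∈ D}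

theorem clConeHull_antipolar_eq_posPolar_eq_recessionCone {E : Type*}
    [NormedAddCommGroup E] [InnerProductSpace ℝ E] [FiniteDimensional ℝ E] (C : Set E)
    (hne : C.Nonempty) (hclosed : IsClosed C) (hconv : Convex ℝ C) (h0 : (0 : E) ∉ C) :
    closure (coneHull (antipolar C)) = posPolar C ∧
    posPolar C = recessionCone (antipolar C) := by
  -- Step 1: the antipolar is nonempty, via separation.
  obtain ⟨f, u, hfu, hub⟩ := geometric_hahn_banach_point_closed hconv hclosed h0
  have hu0 : 0 < u := by simpa using hfu
  set y₀ : E := (InnerProductSpace.toDual ℝ E).symm f with hy₀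
  have hy₀x : ∀ x : E, ⟪y₀, x⟫ = f x := fun x => InnerProductSpace.toDual_symm_apply
  set w₀ : E := u⁻¹ • y₀ with hw₀
  have hw₀mem : w₀ ∈ antipolar C := by
    intro x hx
    have : ⟪w₀, x⟫ = u⁻¹ * f x := by
      rw [hw₀, real_inner_smul_left, hy₀x]
    rw [this]
    have h3 : u⁻¹ * u ≤ u⁻¹ * f x :=
      mul_le_mul_of_nonneg_left (hub x hx).le (inv_nonneg.2 hu0.le)
    rwa [inv_mul_cancel₀ hu0.ne'] at h3
  clear_value y₀ w₀
  have hposClosed : IsClosed (posPolar C) := by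
    have : posPolar C = ⋂ x ∈ C, {y : E | 0 ≤ ⟪x, y⟫} := by
      ext y; simp [posPolar, Set.mem_iInter]
    rw [this]
    exact isClosed_biInter fun x _ =>
      isClosed_le continuous_const (continuous_const.inner continuous_id)
  have hconeSub : coneHull (antipolar C) ⊆ posPolar C := by
    rintro z hz
    simp only [coneHull, Set.mem_iUnion] at hz
    obtain ⟨l, hl, w, hw, rfl⟩ := hz
    intro x hx
    rw [real_inner_comm, real_inner_smul_left]
    exact mul_nonneg hl (le_trans zero_le_one (hw x hx))
  have hsub2 : posPolar C ⊆ closure (coneHull (antipolar C)) := by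
    intro y hy
    have hmem : ∀ n : ℕ, y + (1 / ((n : ℝ) + 1)) • w₀ ∈ coneHull (antipolar C) := by
      intro n
      have hε : (0 : ℝ) < 1 / ((n : ℝ) + 1) := by positivity
      simp only [coneHull, Set.mem_iUnion]
      refine ⟨1 / ((n : ℝ) + 1), hε.le, ((1 / ((n : ℝ) + 1))⁻¹ • y + w₀), ?_, ?_⟩
      · intro x hx
        rw [inner_add_left, real_inner_smul_left]
        have h1 := hy x hx
        have h2 := hw₀mem x hx
        rw [real_inner_comm] at h1
        nlinarith [mul_nonneg (inv_pos.2 hε).le h1]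
      · show (1 / ((n : ℝ) + 1)) • ((1 / ((n : ℝ) + 1))⁻¹ • y + w₀)
            = y + (1 / ((n : ℝ) + 1)) • w₀
        rw [smul_add, smul_smul, mul_inv_cancel₀ hε.ne', one_smul]
    have htend : Filter.Tendsto (fun n : ℕ => y + (1 / ((n : ℝ) + 1)) • w₀)
        Filter.atTop (nhds y) := by
      have : Filter.Tendsto (fun n : ℕ => (1 / ((n : ℝ) + 1)) • w₀)
          Filter.atTop (nhds ((0 : ℝ) • w₀)) :=
        (tendsto_one_div_add_atTop_nhds_zero_nat).smul_const w₀
      simpa using Filter.Tendsto.const_add y this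
    exact mem_closure_of_tendsto htend (Filter.Eventually.of_forall hmem)
  constructor
  · exact le_antisymm (closure_minimal hconeSub hposClosed) hsub2
  · ext y
    constructor
    · intro hy w hw t ht x hx
      have h1 := hw x hx
      have h2 := hy x hx
      rw [inner_add_left, real_inner_smul_left, real_inner_comm x y]
      nlinarith
    · intro hy x hx
      by_contra hneg
      push_neg at hneg
      set t : ℝ := (1 + |⟪w₀, x⟫|) / (-⟪x, y⟫) with htdef
      have hpos : 0 < -⟪x, y⟫ := by linarith
      have ht : 0 ≤ t := by positivity
      have := hy w₀ hw₀mem t ht x hx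
      rw [inner_add_left, real_inner_smul_left, real_inner_comm x y] at this
      have hle : ⟪w₀, x⟫ ≤ |⟪w₀, x⟫| := le_abs_self _
      have ht' : t * ⟪x, y⟫ = -(1 + |⟪w₀, x⟫|) := by
        rw [htdef]
        field_simp
        ring_nf
        rw [mul_inv_cancel₀ hneg.ne]
      nlinarith [abs_nonneg ⟪w₀, x⟫]
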